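/- The two Hamiltonians H̄₁ = p₁² − q₂p₂² + q₁³ − 2q₁q₂ + c̄/q₂ and H̄₂ = −2q₂p₁p₂ − q₁q₂p₂² + q₁²q₂ − q₂² + c̄·q₁/q₂, defined on the open set {q₂ ≠ 0} of ℝ⁴, Poisson-commute with respect to the canonical Poisson bracket. -/

import Mathlib

/-- Canonical Poisson bracket on ℝ⁴ with coordinates (q₁,q₂,p₁,p₂). -/
noncomputable def pb (F G : ℝ → ℝ → ℝ → ℝ → ℝ) (q1 q2 p1 p2 : ℝ) : ℝ :=
    (deriv (fun t => F t q2 p1 p2) q1) * (deriv (fun t => G q1 q2 t p2) p1)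
  + (deriv (fun t => F q1 t p1 p2) q2) * (deriv (fun t => G q1 q2 p1 t) p2)
  - (deriv (fun t => F q1 q2 t p2) p1) * (deriv (fun t => G t q2 p1 p2) q1)
  - (deriv (fun t => F q1 q2 p1 t) p2) * (deriv (fun t => G q1 t p1 p2) q2)

noncomputable def Hbar1 (cb : ℝ) (q1 q2 p1 p2 : ℝ) : ℝ :=
  p1^2 - q2*p2^2 + q1^3 - 2*q1*q2 + cb/q2

noncomputable def Hbar2 (cb : ℝ) (q1 q2 p1 p2 : ℝ) : ℝ :=
  -2*q2*p1*p2 - q1*q2*p2^2 + q1^2*q2 - q2^2 + cb*q1/q2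

theorem stmt2 (cb : ℝ) :
    ∀ q1 q2 p1 p2 : ℝ, q2 ≠ 0 → pb (Hbar1 cb) (Hbar2 cb) q1 q2 p1 p2 = 0 := by
  intro q1 q2 p1 p2 hq2
  have H1 : HasDerivAt (fun t : ℝ => p1 ^ 2 - q2 * p2 ^ 2 + t ^ 3 - 2 * t * q2 + cb / q2)
      (3*q1^2 - 2*q2) q1 := by
    have h := ((((hasDerivAt_const q1 (p1^2)).sub (hasDerivAt_const q1 (q2*p2^2))).add
      (hasDerivAt_pow 3 q1)).sub (((hasDerivAt_id q1).const_mul 2).mul_const q2)).add_const (cb/q2)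
    refine h.congr_deriv ?_
    push_cast; ring
  have H2 : HasDerivAt (fun t : ℝ => p1 ^ 2 - t * p2 ^ 2 + q1 ^ 3 - 2 * q1 * t + cb / t)
      (-p2^2 - 2*q1 - cb/q2^2) q2 := by
    have h := ((((hasDerivAt_const q2 (p1^2)).sub ((hasDerivAt_id q2).mul_const (p2^2))).add_const
      (q1^3)).sub ((hasDerivAt_id q2).const_mul (2*q1))).add
      ((hasDerivAt_const q2 cb).div (hasDerivAt_id q2) hq2)
    refine h.congr_deriv ?_
    simp only [id]; field_simp; ring
  have H3 : HasDerivAt (fun t : ℝ => t ^ 2 - q2 * p2 ^ 2 + q1 ^ 3 - 2 * q1 * q2 + cb / q2)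
      (2*p1) p1 := by
    have h := ((((hasDerivAt_pow 2 p1).sub_const (q2*p2^2)).add_const (q1^3)).sub_const
      (2*q1*q2)).add_const (cb/q2)
    refine h.congr_deriv ?_
    push_cast; ring
  have H4 : HasDerivAt (fun t : ℝ => p1 ^ 2 - q2 * t ^ 2 + q1 ^ 3 - 2 * q1 * q2 + cb / q2)
      (-2*q2*p2) p2 := by
    have h := ((((hasDerivAt_const p2 (p1^2)).sub ((hasDerivAt_pow 2 p2).const_mul q2)).add_const
      (q1^3)).sub_const (2*q1*q2)).add_const (cb/q2)
    refine h.congr_deriv ?_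
    push_cast; ring
  have H5 : HasDerivAt (fun t : ℝ => -2 * q2 * t * p2 - q1 * q2 * p2 ^ 2 + q1 ^ 2 * q2 - q2 ^ 2 + cb * q1 / q2)
      (-2*q2*p2) p1 := by
    have h := (((((hasDerivAt_id p1).const_mul (-2*q2)).mul_const p2).sub_const
      (q1*q2*p2^2)).add_const (q1^2*q2)).sub_const (q2^2) |>.add_const (cb*q1/q2)
    refine h.congr_deriv ?_
    ring
  have H6 : HasDerivAt (fun t : ℝ => -2 * q2 * p1 * t - q1 * q2 * t ^ 2 + q1 ^ 2 * q2 - q2 ^ 2 + cb * q1 / q2)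
      (-2*q2*p1 - 2*q1*q2*p2) p2 := by
    have h := ((((hasDerivAt_id p2).const_mul (-2*q2*p1)).sub
      ((hasDerivAt_pow 2 p2).const_mul (q1*q2))).add_const (q1^2*q2)).sub_const (q2^2)
      |>.add_const (cb*q1/q2)
    refine h.congr_deriv ?_
    push_cast; ring
  have H7 : HasDerivAt (fun t : ℝ => -2 * q2 * p1 * p2 - t * q2 * p2 ^ 2 + t ^ 2 * q2 - q2 ^ 2 + cb * t / q2)
      (-q2*p2^2 + 2*q1*q2 + cb/q2) q1 := by
    have h := ((((hasDerivAt_const q1 (-2*q2*p1*p2)).sub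
      (((hasDerivAt_id q1).mul_const q2).mul_const (p2^2))).add
      ((hasDerivAt_pow 2 q1).mul_const q2)).sub_const (q2^2)).add
      (((hasDerivAt_id q1).const_mul cb).div_const q2)
    refine h.congr_deriv ?_
    push_cast; field_simp; ring
  have H8 : HasDerivAt (fun t : ℝ => -2 * t * p1 * p2 - q1 * t * p2 ^ 2 + q1 ^ 2 * t - t ^ 2 + cb * q1 / t)
      (-2*p1*p2 - q1*p2^2 + q1^2 - 2*q2 - cb*q1/q2^2) q2 := by
    have h := (((((((hasDerivAt_id q2).const_mul (-2)).mul_const p1).mul_const p2).sub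
      (((hasDerivAt_id q2).const_mul q1).mul_const (p2^2))).add
      ((hasDerivAt_id q2).const_mul (q1^2))).sub (hasDerivAt_pow 2 q2)).add
      ((hasDerivAt_const q2 (cb*q1)).div (hasDerivAt_id q2) hq2)
    refine h.congr_deriv ?_
    push_cast; simp only [id]; field_simp; ring
  simp only [pb, Hbar1, Hbar2]
  rw [H1.deriv, H2.deriv, H3.deriv, H4.deriv, H5.deriv, H6.deriv, H7.deriv, H8.deriv]
  field_simp
  ring
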